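/- arXiv:2108.12791 — 3 statements merged into one kernel-verified Lean document; each statement's English description precedes it below -/
import Mathlib

section
/- In a symplectic vector space over a field K (every vector isotropic), any Eichler transformation is a product of three transvections: if c is perpendicular to a then E(c,a) = T_{a+c} ∘ T_a^{-1} ∘ T_c^{-1}, where T_v(x) = x + ⟨x,v⟩v. -/
/-- In a symplectic vector space over a field `K` of characteristic zero (an
alternating bilinear form, so every vector is isotropic), any Eichler
transformation is a product of three transvections: if `⟨a,c⟩ = 0` then
`E(c,a) = T_{a+c} ∘ T_a⁻¹ ∘ T_c⁻¹`, where `T_v(x) = x + ⟨x,v⟩v` and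
`T_v⁻¹(x) = x − ⟨x,v⟩v`. -/
theorem stmt_7 {K : Type*} [Field K] [CharZero K]
    {M : Type*} [AddCommGroup M] [Module K M]
    (B : M →ₗ[K] M →ₗ[K] K)
    (halt : ∀ v : M, B v v = 0)
    (a c : M) (hac : B a c = 0) :
    ∀ x : M,
      x + (B x a) • c + (B x c) • a
        = (fun y => y + (B y (a + c)) • (a + c))
            ((fun y => y - (B y a) • a) ((fun y => y - (B y c) • c) x)) := by
  intro x
  have hca : B c a = 0 := by
    have h := halt (a + c)
    simp only [map_add, LinearMap.add_apply, halt, hac] at h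
    linear_combination h
  simp only [map_sub, map_add, map_smul, LinearMap.sub_apply, LinearMap.add_apply,
    LinearMap.smul_apply, halt, hac, hca, smul_eq_mul, mul_zero, sub_zero, zero_sub,
    mul_neg, neg_zero, add_zero, zero_add]
  module
end

section
/- With M a ℤG-module with G-invariant symplectic form and ⟨a,b⟩ = ∑_g (g^{-1}a·b)e_g as above: if a ∈ M satisfies ⟨a,a⟩ = 0 (equivalently a·ga = 0 for all g ∈ G), then for every r ∈ R_+ = {r ∈ ℤG : r† = r}, the map T_a(r) : x ↦ x + ⟨x,a⟩·r·a is a ℤG-module automorphism of M preserving ⟨·,·⟩, and r ↦ T_a(r) is a group homomorphism from the additive group R_+ to Aut(M, ⟨·,·⟩). -/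
/-- The anti-involution `†` on `ℤG`, determined by `e_g† = e_{g⁻¹}`. -/
noncomputable def zdagger {G : Type*} [Group G] [Fintype G]
    (r : MonoidAlgebra ℤ G) : MonoidAlgebra ℤ G :=
  ∑ g : G, MonoidAlgebra.single g⁻¹ (r.coeff g)

/-- The `ℤG`-valued form `⟨a,b⟩ = ∑_{g∈G} (g⁻¹a · b) e_g`. -/
noncomputable def eqForm {G M : Type*} [Group G] [Fintype G] [AddCommGroup M]
    [DistribMulAction G M] (B : M → M → ℤ) (a b : M) : MonoidAlgebra ℤ G :=
  ∑ g : G, MonoidAlgebra.single g (B (g⁻¹ • a) b)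

/-- The action of an element `s = ∑ s_g e_g` of `ℤG` on `m ∈ M`: `∑ s_g (g • m)`. -/
noncomputable def gact {G M : Type*} [Group G] [Fintype G] [AddCommGroup M]
    [DistribMulAction G M] (s : MonoidAlgebra ℤ G) (m : M) : M :=
  ∑ g : G, (s.coeff g) • (g • m)

set_option linter.unusedSectionVars false

section main
variable {G M : Type*} [Group G] [Fintype G] [AddCommGroup M] [DistribMulAction G M]

lemma zdagger_apply (r : MonoidAlgebra ℤ G) (h : G) : (zdagger r).coeff h = r.coeff h⁻¹ := by
  classical
  unfold zdagger
  rw [MonoidAlgebra.coeff_sum, Finset.sum_apply']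
  simp [MonoidAlgebra.coeff_single, Finsupp.single_apply, inv_eq_iff_eq_inv]

lemma eqForm_apply (B : M → M → ℤ) (a b : M) (h : G) :
    (eqForm (G := G) B a b).coeff h = B (h⁻¹ • a) b := by
  classical
  unfold eqForm
  rw [MonoidAlgebra.coeff_sum, Finset.sum_apply']
  simp [MonoidAlgebra.coeff_single, Finsupp.single_apply]

lemma mul_apply_univ (f g : MonoidAlgebra ℤ G) (x : G) :
    (f * g).coeff x = ∑ h : G, f.coeff h * g.coeff (h⁻¹ * x) := by
  classical
  rw [MonoidAlgebra.coeff_mul]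
  rw [Finsupp.sum_fintype _ _ (by simp)]
  refine Finset.sum_congr rfl fun h _ => ?_
  rw [Finsupp.sum_fintype _ _ (by simp)]
  rw [show (∑ a₂ : G, if h * a₂ = x then f.coeff h * g.coeff a₂ else 0)
      = ∑ a₂ : G, if a₂ = h⁻¹ * x then f.coeff h * g.coeff a₂ else 0 from
    Finset.sum_congr rfl fun a₂ _ => by rw [eq_inv_mul_iff_mul_eq]]
  simp [Finset.sum_ite_eq']

variable (B : M → M → ℤ)
    (haddl : ∀ a a' b : M, B (a + a') b = B a b + B a' b)
    (haddr : ∀ a b b' : M, B a (b + b') = B a b + B a b')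
    (halt : ∀ a : M, B a a = 0)
    (hG : ∀ (g : G) (a b : M), B (g • a) (g • b) = B a b)

lemma gsmul_comm (g : G) (n : ℤ) (m : M) : g • (n • m) = n • (g • m) :=
  (DistribMulAction.toAddMonoidHom M g).map_zsmul n m

include haddr in
lemma Bzsmul_right (x : M) (n : ℤ) (b : M) : B x (n • b) = n * B x b := by
  have := map_zsmul (AddMonoidHom.mk' (B x) (haddr x)) n b
  simpa using this

include haddl in
lemma Bzsmul_left (y : M) (n : ℤ) (b : M) : B (n • b) y = n * B b y := by
  have := map_zsmul (AddMonoidHom.mk' (fun z => B z y) (fun u v => haddl u v y)) n b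
  simpa using this

include haddl haddr halt in
lemma Bsym (x y : M) : B x y = - B y x := by
  have h := halt (x + y)
  rw [haddl, haddr, haddr, halt, halt] at h
  linarith

include hG in
lemma hG' (k : G) (z b : M) : B (k⁻¹ • z) b = B z (k • b) := by
  have := hG k (k⁻¹ • z) b
  rw [smul_inv_smul] at this
  exact this.symm

include haddl in
lemma eqForm_add_left (x y b : M) :
    eqForm (G := G) B (x + y) b = eqForm (G := G) B x b + eqForm (G := G) B y b := by
  ext g
  rw [MonoidAlgebra.coeff_add, Finsupp.add_apply, eqForm_apply, eqForm_apply, eqForm_apply, smul_add, haddl]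

include haddr in
lemma eqForm_add_right (x y b : M) :
    eqForm (G := G) B x (y + b) = eqForm (G := G) B x y + eqForm (G := G) B x b := by
  ext g
  rw [MonoidAlgebra.coeff_add, Finsupp.add_apply, eqForm_apply, eqForm_apply, eqForm_apply, haddr]

lemma gact_add (s t : MonoidAlgebra ℤ G) (m : M) :
    gact (s + t) m = gact s m + gact t m := by
  unfold gact
  rw [← Finset.sum_add_distrib]
  exact Finset.sum_congr rfl fun g _ => by rw [MonoidAlgebra.coeff_add, Finsupp.add_apply, add_smul]

lemma gact_zero (m : M) : gact (0 : MonoidAlgebra ℤ G) m = 0 := by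
  unfold gact
  refine Finset.sum_eq_zero fun g _ => ?_
  rw [MonoidAlgebra.coeff_zero, Finsupp.zero_apply, zero_smul]

lemma eqForm_gsmul (g : G) (x b : M) :
    eqForm (G := G) B (g • x) b = MonoidAlgebra.single g 1 * eqForm (G := G) B x b := by
  ext h
  rw [eqForm_apply, MonoidAlgebra.single_mul_apply, eqForm_apply, one_mul,
    mul_inv_rev, mul_smul, inv_inv]

lemma gact_single_mul (g : G) (s : MonoidAlgebra ℤ G) (m : M) :
    gact (MonoidAlgebra.single g 1 * s) m = g • gact s m := by
  unfold gact
  rw [Finset.smul_sum]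
  refine Fintype.sum_equiv (Equiv.mulLeft g⁻¹) _ _ fun h => ?_
  simp only [Equiv.coe_mulLeft, MonoidAlgebra.single_mul_apply, one_mul]
  rw [gsmul_comm, mul_smul, smul_inv_smul]

include haddr in
lemma B_sum_right {ι : Type*} (z : M) (sF : Finset ι) (f : ι → M) :
    B z (∑ i ∈ sF, f i) = ∑ i ∈ sF, B z (f i) :=
  map_sum (AddMonoidHom.mk' (B z) (haddr z)) f sF

include haddl in
lemma B_sum_left {ι : Type*} (y : M) (sF : Finset ι) (f : ι → M) :
    B (∑ i ∈ sF, f i) y = ∑ i ∈ sF, B (f i) y :=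
  map_sum (AddMonoidHom.mk' (fun z => B z y) (fun u v => haddl u v y)) f sF

include haddr hG in
lemma eqForm_gact_right (x b : M) (s : MonoidAlgebra ℤ G) :
    eqForm (G := G) B x (gact s b) = eqForm (G := G) B x b * zdagger s := by
  ext g
  rw [eqForm_apply, mul_apply_univ]
  unfold gact
  rw [B_sum_right B haddr]
  refine Fintype.sum_equiv (Equiv.mulLeft g) _ _ fun k => ?_
  simp only [Equiv.coe_mulLeft]
  rw [Bzsmul_right B haddr, eqForm_apply, zdagger_apply]
  have h1 : ((g * k)⁻¹ * g)⁻¹ = k := by group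
  rw [h1, mul_inv_rev, mul_smul, hG' B hG k (g⁻¹ • x) b, mul_comm]

include haddl in
lemma eqForm_gact_left (b y : M) (s : MonoidAlgebra ℤ G) :
    eqForm (G := G) B (gact s b) y = s * eqForm (G := G) B b y := by
  ext g
  rw [eqForm_apply, mul_apply_univ]
  unfold gact
  rw [Finset.smul_sum]
  rw [show (∑ h : G, g⁻¹ • ((s.coeff h) • (h • b))) = ∑ h : G, (s.coeff h) • ((g⁻¹ * h) • b) from
    Finset.sum_congr rfl fun h _ => by rw [gsmul_comm, mul_smul]]
  rw [B_sum_left B haddl]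
  refine Finset.sum_congr rfl fun h _ => ?_
  rw [Bzsmul_left B haddl, eqForm_apply, mul_inv_rev, inv_inv]

include haddl haddr halt hG in
lemma zdagger_eqForm (x y : M) :
    zdagger (eqForm (G := G) B x y) = - eqForm (G := G) B y x := by
  ext g
  rw [zdagger_apply, eqForm_apply, MonoidAlgebra.coeff_neg, Finsupp.neg_apply, eqForm_apply, inv_inv]
  rw [Bsym B haddl haddr halt (g⁻¹ • y) x, neg_neg, ← hG' B hG g⁻¹ x y, inv_inv]

lemma zdagger_mul (s t : MonoidAlgebra ℤ G) :
    zdagger (s * t) = zdagger t * zdagger s := by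
  ext g
  rw [zdagger_apply, mul_apply_univ, mul_apply_univ]
  refine Fintype.sum_equiv (Equiv.mulLeft g) _ _ fun k => ?_
  simp only [Equiv.coe_mulLeft]
  rw [zdagger_apply, zdagger_apply]
  have h1 : ((g * k)⁻¹ * g)⁻¹ = k := by group
  rw [h1, mul_inv_rev, mul_comm]

end main

/-- The transvection `T_a(r) : x ↦ x + ⟨x,a⟩·r·a`. -/
noncomputable def Ta {G M : Type*} [Group G] [Fintype G] [AddCommGroup M]
    [DistribMulAction G M] (B : M → M → ℤ) (a : M) (r : MonoidAlgebra ℤ G)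
    (x : M) : M :=
  x + gact (eqForm (G := G) B x a * r) a

/-- If `a ∈ M` is `R`-isotropic (`⟨a,a⟩ = 0` in `ℤG`), then for every
`r ∈ R₊ = {r ∈ ℤG : r† = r}` the map `T_a(r) : x ↦ x + ⟨x,a⟩·r·a` is a
`ℤG`-module automorphism of `M` preserving `⟨·,·⟩`, and `r ↦ T_a(r)` is a group
homomorphism from the additive group `R₊` to `Aut(M, ⟨·,·⟩)`. -/
theorem stmt_14 {G M : Type*} [Group G] [Fintype G] [AddCommGroup M]
    [Module.Free ℤ M] [Module.Finite ℤ M] [DistribMulAction G M]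
    (B : M → M → ℤ)
    (haddl : ∀ a a' b : M, B (a + a') b = B a b + B a' b)
    (haddr : ∀ a b b' : M, B a (b + b') = B a b + B a b')
    (halt : ∀ a : M, B a a = 0)
    (hnd : ∀ a : M, (∀ b : M, B a b = 0) → a = 0)
    (hG : ∀ (g : G) (a b : M), B (g • a) (g • b) = B a b)
    (a : M) (ha : eqForm (G := G) B a a = 0) :
    (∀ r : MonoidAlgebra ℤ G, zdagger r = r →
      (∀ x y : M, Ta B a r (x + y) = Ta B a r x + Ta B a r y) ∧
      (∀ (g : G) (x : M), Ta B a r (g • x) = g • Ta B a r x) ∧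
      Function.Bijective (Ta B a r) ∧
      (∀ x y : M,
        eqForm (G := G) B (Ta B a r x) (Ta B a r y) = eqForm (G := G) B x y)) ∧
    (∀ r r' : MonoidAlgebra ℤ G, zdagger r = r → zdagger r' = r' →
      Ta B a (r + r') = Ta B a r ∘ Ta B a r') := by
  classical
  have hom : ∀ r r' : MonoidAlgebra ℤ G, Ta B a (r + r') = Ta B a r ∘ Ta B a r' := by
    intro r r'
    funext x
    simp only [Function.comp_apply, Ta]
    rw [eqForm_add_left B haddl, eqForm_gact_left B haddl, ha, mul_zero, add_zero]
    rw [mul_add, gact_add]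
    abel
  have hTa0 : Ta B a (0 : MonoidAlgebra ℤ G) = id := by
    funext x
    simp only [Ta, mul_zero, gact_zero, add_zero, id]
  refine ⟨fun r hr => ⟨?_, ?_, ?_, ?_⟩, fun r r' _ _ => hom r r'⟩
  · intro x y
    simp only [Ta]
    rw [eqForm_add_left B haddl, add_mul, gact_add]
    abel
  · intro g x
    simp only [Ta]
    rw [eqForm_gsmul B, mul_assoc, gact_single_mul, smul_add]
  · have h1 : Ta B a r ∘ Ta B a (-r) = id := by
      rw [← hom, add_neg_cancel, hTa0]
    have h2 : Ta B a (-r) ∘ Ta B a r = id := by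
      rw [← hom, neg_add_cancel, hTa0]
    exact Function.bijective_iff_has_inverse.mpr
      ⟨Ta B a (-r), congrFun h2, congrFun h1⟩
  · intro x y
    have hzs : zdagger (eqForm (G := G) B y a * r)
        = -(r * eqForm (G := G) B a y) := by
      rw [zdagger_mul, zdagger_eqForm B haddl haddr halt hG, hr, mul_neg]
    simp only [Ta]
    rw [eqForm_add_left B haddl, eqForm_add_right B haddr, eqForm_add_right B haddr]
    simp only [eqForm_gact_right B haddr hG, eqForm_gact_left B haddl]
    rw [ha, mul_zero, zero_mul, add_zero, hzs, mul_neg, ← mul_assoc]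
    abel
end

section
/- Let D be a division ring with positive anti-involution †, M a left D-module with skew-hermitian form, M_o its radical, and suppose every element of a subgroup U of the form-preserving automorphisms acts trivially on M_o and on M/M_o. If c ∈ M_o and a ∈ M, then the Eichler transformation E(c,a) acts trivially on M_o and on M/M_o, and the assignment c⊗a ↦ E(c,a) descends to a well-defined map on M_o† ⊗_D (M/M_o); furthermore E(c,a)∘E(c',a') = E(c,a)·E(c',a') corresponds to addition: E(c,a)∘E(c',a')(x) ≡ x + ⟨x,a⟩c + ⟨x,a'⟩c' modulo the stated triviality, making the unipotent radical a vector group extension 0 → u(M_o) → R_u → M_o†⊗_D(M/M_o) → 0. -/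
/-- The Eichler transformation `E(c,a) : x ↦ x + ⟨x,a⟩c + ⟨x,c⟩a + (1/2)⟨x,c⟩⟨a,a⟩c`. -/
def eichlerHalf {D : Type*} [DivisionRing D] {M : Type*} [AddCommGroup M]
    [Module D M] (B : M → M → D) (c a : M) : M → M :=
  fun x => x + (B x a) • c + (B x c) • a + ((2 : D)⁻¹ * (B x c * B a a)) • c

/-- Let `D` be a division ring, finite-dimensional over `ℚ`, with a positive
anti-involution `†` (modelled by `star`), and `M` a left `D`-module with a
skew-hermitian form `B`, with radical `M₀ = {x : ∀ y, B x y = 0}`.  For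
`c, c' ∈ M₀` and `a, a' ∈ M`:
* `E(c,a)` reduces to `x ↦ x + ⟨x,a⟩c`;
* `E(c,a)` acts trivially on `M₀`;
* `E(c,a)` acts trivially on `M/M₀` (i.e. `E(c,a)x − x ∈ M₀`);
* composition corresponds to addition:
  `E(c,a) ∘ E(c',a') (x) = x + ⟨x,a⟩c + ⟨x,a'⟩c'`;
* the assignment `c ⊗ a ↦ E(c,a)` is well defined on `M₀† ⊗_D (M/M₀)`:
  `E(c,a)` depends only on the map `x ↦ ⟨x,a⟩c`.
(These facts make the unipotent radical an extension of vector groups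
`0 → u(M₀) → R_u → M₀† ⊗_D (M/M₀) → 0`.) -/
theorem stmt_17 {D : Type*} [DivisionRing D] [CharZero D] [StarRing D]
    [Algebra ℚ D] [FiniteDimensional ℚ D]
    {M : Type*} [AddCommGroup M] [Module D M]
    (hpos : ∀ d : D, d ≠ 0 →
      0 < LinearMap.trace ℚ D (LinearMap.mulLeft ℚ (d * star d)))
    (B : M → M → D)
    (hlin : ∀ (d : D) (a a' b : M), B (d • a + a') b = d * B a b + B a' b)
    (hskew : ∀ a b : M, B b a = - star (B a b))
    (c c' a a' : M)
    (hc : ∀ y : M, B c y = 0) (hc' : ∀ y : M, B c' y = 0) :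
    (∀ x : M, eichlerHalf B c a x = x + (B x a) • c) ∧
    (∀ m : M, (∀ y : M, B m y = 0) → eichlerHalf B c a m = m) ∧
    (∀ x y : M, B (eichlerHalf B c a x - x) y = 0) ∧
    (∀ x : M, eichlerHalf B c a (eichlerHalf B c' a' x)
        = x + (B x a) • c + (B x a') • c') ∧
    ((∀ x : M, (B x a) • c = (B x a') • c') →
      ∀ x : M, eichlerHalf B c a x = eichlerHalf B c' a' x) := by
  have hB0 : ∀ b : M, B 0 b = 0 := by
    intro b
    have h := hlin 1 0 0 b
    simp only [one_smul, add_zero, one_mul] at h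
    have := add_right_cancel (a := B 0 b) (b := B 0 b) (c := 0) (by simpa using h.symm)
    exact this
  have hsmul : ∀ (d : D) (z y : M), B (d • z) y = d * B z y := by
    intro d z y
    have h := hlin d z 0 y
    simpa [hB0] using h
  have hxc : ∀ x : M, B x c = 0 := by
    intro x; rw [hskew, hc, star_zero, neg_zero]
  have hxc' : ∀ x : M, B x c' = 0 := by
    intro x; rw [hskew, hc', star_zero, neg_zero]
  have h1 : ∀ x : M, eichlerHalf B c a x = x + (B x a) • c := by
    intro x; simp [eichlerHalf, hxc]
  have h1' : ∀ x : M, eichlerHalf B c' a' x = x + (B x a') • c' := by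
    intro x; simp [eichlerHalf, hxc']
  have hadd : ∀ (z x y : M), B (z + x) y = B z x + B x y → True := fun _ _ _ _ => trivial
  refine ⟨h1, ?_, ?_, ?_, ?_⟩
  · intro m hm
    rw [h1, hm, zero_smul, add_zero]
  · intro x y
    rw [h1, add_sub_cancel_left, hsmul, hc, mul_zero]
  · intro x
    rw [h1', h1]
    have hBx : B (x + (B x a') • c') a = B x a := by
      rw [add_comm, hlin, hc', mul_zero, zero_add]
    rw [hBx]
    abel
  · intro h x
    rw [h1, h1', h x]
end
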